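/- Let f : 𝔻² → 𝔻 be holomorphic with f(0,0) = 0, ∂f/∂z (0,0) = 0 and ∂f/∂w (0,0) = 1. Then f(z,w) = w for all (z,w) ∈ 𝔻². -/

import Mathlib

/-- The open unit bidisk in `ℂ²`. -/
def bidisk : Set (ℂ × ℂ) := {p | ‖p.1‖ < 1 ∧ ‖p.2‖ < 1}

/-- The Möbius map `ζ ↦ λ (ζ - a) / (1 - conj a ⬝ ζ)`. -/
noncomputable def mobius (l a : ℂ) (z : ℂ) : ℂ :=
  l * (z - a) / (1 - (starRingEnd ℂ) a * z)

/-- `φ` is an automorphism of the unit disk: on the disk it agrees with a Möbius map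
`ζ ↦ λ (ζ - a)/(1 - conj a ⬝ ζ)` with `|λ| = 1` and `|a| < 1`. -/
def IsDiskAut (φ : ℂ → ℂ) : Prop :=
  ∃ l a : ℂ, ‖l‖ = 1 ∧ ‖a‖ < 1 ∧ ∀ z : ℂ, ‖z‖ < 1 → φ z = mobius l a z

/-- A balanced disk in the bidisk: the image of the unit disk under `ζ ↦ (φ₁ ζ, φ₂ ζ)` for
automorphisms `φ₁, φ₂` of the disk. -/
def IsBalancedDisk (D : Set (ℂ × ℂ)) : Prop :=
  ∃ φ₁ φ₂ : ℂ → ℂ, IsDiskAut φ₁ ∧ IsDiskAut φ₂ ∧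
    D = {p : ℂ × ℂ | ∃ ζ : ℂ, ‖ζ‖ < 1 ∧ p = (φ₁ ζ, φ₂ ζ)}

/-- An extreme disk for `f`: a balanced disk on which the restriction of `f` is an
automorphism of the disk. -/
def IsExtremeDisk (f : ℂ × ℂ → ℂ) (D : Set (ℂ × ℂ)) : Prop :=
  ∃ φ₁ φ₂ : ℂ → ℂ, IsDiskAut φ₁ ∧ IsDiskAut φ₂ ∧
    D = {p : ℂ × ℂ | ∃ ζ : ℂ, ‖ζ‖ < 1 ∧ p = (φ₁ ζ, φ₂ ζ)} ∧
    IsDiskAut (fun ζ => f (φ₁ ζ, φ₂ ζ))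

/-- The extreme set `X(f)` of `f : 𝔻² → 𝔻`: the points of the bidisk at which
`1 - |f(z,w)|² = (1 - |z|²)|f₁(z,w)| + (1 - |w|²)|f₂(z,w)|`. -/
def extremeSet (f : ℂ × ℂ → ℂ) : Set (ℂ × ℂ) :=
  {p ∈ bidisk | 1 - ‖f p‖ ^ 2 =
    (1 - ‖p.1‖ ^ 2) * ‖fderiv ℂ f p (1, 0)‖ + (1 - ‖p.2‖ ^ 2) * ‖fderiv ℂ f p (0, 1)‖}

open Metric Set
lemma isOpen_bidisk' : IsOpen bidisk := by
  have h1 : IsOpen {p : ℂ × ℂ | ‖p.1‖ < 1} :=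
    isOpen_lt (continuous_norm.comp continuous_fst) continuous_const
  have h2 : IsOpen {p : ℂ × ℂ | ‖p.2‖ < 1} :=
    isOpen_lt (continuous_norm.comp continuous_snd) continuous_const
  exact h1.inter h2

lemma schwarz_id {g : ℂ → ℂ} (hd : DifferentiableOn ℂ g (ball 0 1))
    (hm : Set.MapsTo g (ball 0 1) (ball 0 1))
    (h0 : g 0 = 0) (h1 : deriv g 0 = 1) :
    ∀ z ∈ ball (0:ℂ) 1, g z = z := by
  have hm' : Set.MapsTo g (ball 0 1) (closedBall (g 0) 1) := by rw [h0]; exact hm.mono_right ball_subset_closedBall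
  have hz0 : (0:ℂ) ∈ ball (0:ℂ) 1 := by simp
  have heq : ‖dslope g 0 0‖ = 1 / 1 := by rw [dslope_same, h1]; simp
  have H := Complex.affine_of_mapsTo_ball_of_exists_norm_dslope_eq_div hd hm' hz0 heq
  intro z hz
  simpa [h0, dslope_same, h1] using H hz

/-- Schwarz-type rigidity on the bidisk: if `f : 𝔻² → 𝔻` is holomorphic with `f(0,0) = 0`,
`∂f/∂z(0,0) = 0` and `∂f/∂w(0,0) = 1`, then `f(z,w) = w`. -/
theorem eq_snd_of_schwarz_extremal (f : ℂ × ℂ → ℂ)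
    (hf : DifferentiableOn ℂ f bidisk) (hmap : ∀ p ∈ bidisk, ‖f p‖ < 1)
    (h0 : f (0, 0) = 0)
    (h1 : fderiv ℂ f (0, 0) (1, 0) = 0)
    (h2 : fderiv ℂ f (0, 0) (0, 1) = 1) :
    ∀ p ∈ bidisk, f p = p.2 := by
  have hfa : ∀ p ∈ bidisk, DifferentiableAt ℂ f p := fun p hp =>
    hf.differentiableAt (isOpen_bidisk'.mem_nhds hp)
  have h00 : ((0:ℂ), (0:ℂ)) ∈ bidisk := by constructor <;> simp
  -- Step 1: slices through the origin
  have step1 : ∀ l : ℂ, ‖l‖ < 1 → ∀ ζ : ℂ, ‖ζ‖ < 1 → f (l * ζ, ζ) = ζ := by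
    intro l hl
    set g : ℂ → ℂ := fun ζ => f (l * ζ, ζ) with hg
    have hmem : ∀ ζ : ℂ, ζ ∈ ball (0:ℂ) 1 → (l * ζ, ζ) ∈ bidisk := by
      intro ζ hζ
      rw [mem_ball_zero_iff] at hζ
      refine ⟨?_, hζ⟩
      calc ‖l * ζ‖ = ‖l‖ * ‖ζ‖ := norm_mul _ _
        _ ≤ 1 * ‖ζ‖ := by nlinarith [norm_nonneg ζ]
        _ < 1 := by simpa using hζ
    have hdin : Differentiable ℂ (fun ζ : ℂ => (l * ζ, ζ)) :=
      ((differentiable_id.const_mul l).prodMk differentiable_id)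
    have hgd : DifferentiableOn ℂ g (ball 0 1) := by
      intro ζ hζ
      have : DifferentiableAt ℂ (f ∘ fun ζ : ℂ => (l * ζ, ζ)) ζ :=
        DifferentiableAt.comp (f := fun ζ : ℂ => (l * ζ, ζ)) ζ (hfa _ (hmem ζ hζ)) (hdin ζ)
      exact this.differentiableWithinAt
    have hgm : Set.MapsTo g (ball 0 1) (ball 0 1) := by
      intro ζ hζ
      rw [mem_ball_zero_iff]
      exact hmap _ (hmem ζ hζ)
    have hg0 : g 0 = 0 := by
      show f (l * 0, 0) = 0
      rw [mul_zero]; exact h0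
    have hprod : HasDerivAt (fun ζ : ℂ => (l * ζ, ζ)) (l, 1) 0 := by
      have ha : HasDerivAt (fun ζ : ℂ => l * ζ) l 0 := by
        simpa using (hasDerivAt_id (0:ℂ)).const_mul l
      exact HasDerivAt.prodMk ha (hasDerivAt_id 0)
    have hfd : HasFDerivAt f (fderiv ℂ f (0, 0)) (0, 0) := (hfa _ h00).hasFDerivAt
    have hgderiv : HasDerivAt g (fderiv ℂ f (0, 0) (l, 1)) 0 := by
      have hfd' : HasFDerivAt f (fderiv ℂ f (0, 0)) ((fun ζ : ℂ => (l * ζ, ζ)) 0) := by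
        simpa using hfd
      have hcomp : HasDerivAt (f ∘ fun ζ : ℂ => (l * ζ, ζ)) (fderiv ℂ f (0, 0) (l, 1)) 0 :=
        HasFDerivAt.comp_hasDerivAt (f := fun ζ : ℂ => (l * ζ, ζ)) 0 hfd' hprod
      exact hcomp
    have hval : fderiv ℂ f (0, 0) (l, 1) = 1 := by
      have hsum : (l, (1:ℂ)) = l • ((1:ℂ), (0:ℂ)) + ((0:ℂ), (1:ℂ)) := by
        simp [Prod.ext_iff]
      rw [hsum, map_add, map_smul, h1, h2]
      simp
    have hderiv1 : deriv g 0 = 1 := by rw [hgderiv.deriv, hval]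
    intro ζ hζ
    exact schwarz_id hgd hgm hg0 hderiv1 ζ (mem_ball_zero_iff.mpr hζ)
  -- Step 2: identity theorem in the second variable
  rintro ⟨z, w⟩ ⟨hz, hw⟩
  simp only at hz hw ⊢
  set F : ℂ → ℂ := fun w => f (z, w) - w with hF
  have hFd : DifferentiableOn ℂ F (ball 0 1) := by
    intro w hw'
    rw [mem_ball_zero_iff] at hw'
    have hp : ((z, w) : ℂ × ℂ) ∈ bidisk := ⟨hz, hw'⟩
    exact (((hfa _ hp).comp w ((differentiableAt_const z).prodMk differentiableAt_id)).sub
      differentiableAt_id).differentiableWithinAt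
  have hFa : AnalyticOnNhd ℂ F (ball 0 1) := hFd.analyticOnNhd isOpen_ball
  set S : Set ℂ := {w : ℂ | ‖z‖ < ‖w‖ ∧ ‖w‖ < 1} with hS
  have hSopen : IsOpen S :=
    (isOpen_lt continuous_const continuous_norm).inter
      (isOpen_lt continuous_norm continuous_const)
  have hFS : ∀ w ∈ S, F w = 0 := by
    rintro w ⟨hw1, hw2⟩
    have hwne : w ≠ 0 := by
      intro h; rw [h] at hw1; simp at hw1; exact absurd hw1 (norm_nonneg z).not_gt
    have hlnorm : ‖z / w‖ < 1 := by
      rw [norm_div, div_lt_one (lt_of_le_of_lt (norm_nonneg z) hw1)]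
      exact hw1
    have := step1 (z / w) hlnorm w hw2
    rw [div_mul_cancel₀ z hwne] at this
    simp [hF, this]
  set w0 : ℂ := (((‖z‖ + 1) / 2 : ℝ) : ℂ) with hw0
  have hw0norm : ‖w0‖ = (‖z‖ + 1) / 2 := by
    rw [hw0, Complex.norm_real, Real.norm_eq_abs, abs_of_nonneg (by positivity)]
  have hw0S : w0 ∈ S := by
    constructor <;> rw [hw0norm] <;> linarith [norm_nonneg z]
  have hw0ball : w0 ∈ ball (0:ℂ) 1 := by
    rw [mem_ball_zero_iff, hw0norm]; linarith
  have hev : F =ᶠ[nhds w0] 0 :=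
    Filter.eventuallyEq_of_mem (hSopen.mem_nhds hw0S) hFS
  have := hFa.eqOn_zero_of_preconnected_of_eventuallyEq_zero
    (convex_ball (0:ℂ) 1).isPreconnected hw0ball hev (mem_ball_zero_iff.mpr hw)
  have h' : f (z, w) - w = 0 := this
  exact sub_eq_zero.mp h'
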